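/- Let I be a monomial ideal of R = K[x_1,…,x_n], let p be a monomial prime ideal of R, let t ≥ 1 be an integer, let α_1,…,α_s be positive integers, and let y_1,…,y_s be distinct variables of R such that p ∉ Ass(R/(I^t + (y_1^{α_1}))) and, for each i = 2,…,s, p ∉ Ass(R/((I^t : ∏_{j=1}^{i−1} y_j^{α_j}) + (y_i^{α_i}))). If ∏_{i=1}^s y_i^{α_i} ∈ I^ℓ for some integer ℓ ≥ t, then p ∉ Ass(R/I^t). -/

import Mathlib

open MvPolynomial

/-- `I` is an ideal of `K[x_1,…,x_n]` generated by monomials. -/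
def IsMonomialIdeal {K : Type*} [Field K] {n : ℕ}
    (I : Ideal (MvPolynomial (Fin n) K)) : Prop :=
  ∃ S : Set (Fin n →₀ ℕ),
    I = Ideal.span ((fun e => MvPolynomial.monomial e (1 : K)) '' S)

section Aux

variable {R : Type*} [CommRing R] [IsNoetherianRing R]

lemma mem_assPrimes_quot {J p : Ideal R} (hp : p.IsPrime) {f : R}
    (h : ∀ r, r ∈ p ↔ r * f ∈ J) : p ∈ associatedPrimes R (R ⧸ J) := by
  refine isAssociatedPrime_iff.mpr ⟨hp, Ideal.Quotient.mk J f, ?_⟩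
  ext r
  rw [Submodule.mem_colon_singleton, Submodule.mem_bot, h]
  have : r • Ideal.Quotient.mk J f = Ideal.Quotient.mk J (r * f) := rfl
  rw [this, Ideal.Quotient.eq_zero_iff_mem]

lemma step_lemma {J p : Ideal R} (hp : p.IsPrime) {g f : R}
    (hf : g * f ∉ J) (hpf : ∀ r, r ∈ p ↔ r * (g * f) ∈ J) (b : R)
    (hass : p ∉ associatedPrimes R
      (R ⧸ (J.colon (Ideal.span {g}) + Ideal.span {b}))) :
    ∃ h, g * (b * h) ∉ J ∧ ∀ r, r ∈ p ↔ r * (g * (b * h)) ∈ J := by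
  set J' := J.colon (Ideal.span {g}) with hJ'
  have hmem : ∀ a : R, a ∈ J' ↔ a * g ∈ J := fun a => Submodule.mem_colon_span_singleton
  have hf' : f ∉ J' := fun hc => hf (by rw [hmem] at hc; rwa [mul_comm] at hc)
  have hpf' : ∀ r, r ∈ p ↔ r * f ∈ J' := by
    intro r
    rw [hpf, hmem, show r * f * g = r * (g * f) by ring]
  have key : ∃ h, b * h ∉ J' ∧ ∀ r, r ∈ p ↔ r * (b * h) ∈ J' := by
    by_cases hcase : f ∈ J' + Ideal.span {b}
    · obtain ⟨j, hj, z, hz, hjz⟩ := Submodule.mem_sup.mp hcase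
      obtain ⟨h, rfl⟩ := Ideal.mem_span_singleton'.mp hz
      rw [mul_comm h b] at hjz
      have hbh : b * h = f - j := by rw [← hjz]; ring
      refine ⟨h, ?_, ?_⟩
      · intro hc
        rw [hbh] at hc
        have : f ∈ J' := by
          have := J'.add_mem hc hj; rwa [sub_add_cancel] at this
        exact hf' this
      · intro r
        rw [hpf']
        constructor
        · intro hr
          have : r * f - r * j ∈ J' := J'.sub_mem hr (J'.mul_mem_left _ hj)
          rwa [← mul_sub, ← hbh] at this
        · intro hr
          have : r * (b * h) + r * j ∈ J' := J'.add_mem hr (J'.mul_mem_left _ hj)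
          rwa [← mul_add, hbh, sub_add_cancel] at this
    · have hsub : ∀ r ∈ p, r * f ∈ J' + Ideal.span {b} := fun r hr =>
        Submodule.mem_sup.mpr ⟨r * f, (hpf' r).mp hr, 0, Ideal.zero_mem _, add_zero _⟩
      have hne : ∃ r0, r0 * f ∈ J' + Ideal.span {b} ∧ r0 ∉ p := by
        by_contra hn
        push_neg at hn
        exact hass (mem_assPrimes_quot hp (fun r => ⟨hsub r, hn r⟩))
      obtain ⟨r0, hr0f, hr0p⟩ := hne
      obtain ⟨j, hj, z, hz, hjz⟩ := Submodule.mem_sup.mp hr0f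
      obtain ⟨h, rfl⟩ := Ideal.mem_span_singleton'.mp hz
      rw [mul_comm h b] at hjz
      have hbh : b * h = r0 * f - j := by rw [← hjz]; ring
      refine ⟨h, ?_, ?_⟩
      · intro hc
        rw [hbh] at hc
        have : r0 * f ∈ J' := by
          have := J'.add_mem hc hj; rwa [sub_add_cancel] at this
        exact hr0p ((hpf' r0).mpr this)
      · intro r
        constructor
        · intro hr
          rw [hbh, mul_sub]
          refine J'.sub_mem ?_ (J'.mul_mem_left _ hj)
          rw [show r * (r0 * f) = r * r0 * f by ring]
          exact (hpf' _).mp (p.mul_mem_right r0 hr)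
        · intro hr
          rw [hbh, mul_sub] at hr
          have h1 : r * (r0 * f) ∈ J' := by
            have := J'.add_mem hr (J'.mul_mem_left r hj)
            rwa [sub_add_cancel] at this
          have h2 : r * r0 ∈ p := (hpf' _).mpr (by rwa [← mul_assoc] at h1)
          exact (hp.mem_or_mem h2).resolve_right hr0p
  obtain ⟨h, hbh, hph⟩ := key
  refine ⟨h, ?_, ?_⟩
  · intro hc
    exact hbh ((hmem _).mpr (by rwa [show b * h * g = g * (b * h) by ring]))
  · intro r
    rw [hph r, hmem, show r * (b * h) * g = r * (g * (b * h)) by ring]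

lemma exists_of_mem_assPrimes {J p : Ideal R} (hA : p ∈ associatedPrimes R (R ⧸ J)) :
    ∃ f, f ∉ J ∧ ∀ r, r ∈ p ↔ r * f ∈ J := by
  obtain ⟨hp, x, hx⟩ := isAssociatedPrime_iff.mp hA
  obtain ⟨f, rfl⟩ := Ideal.Quotient.mk_surjective x
  have hiff : ∀ r, r ∈ p ↔ r * f ∈ J := by
    intro r
    rw [hx, Submodule.mem_colon_singleton, Submodule.mem_bot]
    have : r • Ideal.Quotient.mk J f = Ideal.Quotient.mk J (r * f) := rfl
    rw [this, Ideal.Quotient.eq_zero_iff_mem]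
  refine ⟨f, ?_, hiff⟩
  intro hc
  exact hp.ne_top (Ideal.eq_top_iff_one _ |>.mpr ((hiff 1).mpr (by rwa [one_mul])))

end Aux

theorem not_associated_of_steps_and_prod_mem_pow'
    {K : Type*} [Field K] {n s : ℕ}
    (I : Ideal (MvPolynomial (Fin n) K))
    (T : Set (Fin n)) (t : ℕ)
    (α : Fin s → ℕ)
    (y : Fin s → Fin n)
    (h1 : ∀ i : Fin s, (i : ℕ) = 0 →
      Ideal.span ((X : Fin n → MvPolynomial (Fin n) K) '' T) ∉
        associatedPrimes (MvPolynomial (Fin n) K)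
          (MvPolynomial (Fin n) K ⧸
            (I ^ t + Ideal.span {(X (y i) : MvPolynomial (Fin n) K) ^ α i})))
    (h2 : ∀ i : Fin s, 0 < (i : ℕ) →
      Ideal.span ((X : Fin n → MvPolynomial (Fin n) K) '' T) ∉
        associatedPrimes (MvPolynomial (Fin n) K)
          (MvPolynomial (Fin n) K ⧸
            ((I ^ t).colon (Ideal.span
                {∏ j ∈ Finset.univ.filter (fun j => j < i),
                  (X (y j) : MvPolynomial (Fin n) K) ^ α j}) +
              Ideal.span {(X (y i) : MvPolynomial (Fin n) K) ^ α i})))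
    (ℓ : ℕ) (hℓ : t ≤ ℓ)
    (hprod : (∏ i, (X (y i) : MvPolynomial (Fin n) K) ^ α i) ∈ I ^ ℓ) :
    Ideal.span ((X : Fin n → MvPolynomial (Fin n) K) '' T) ∉
      associatedPrimes (MvPolynomial (Fin n) K)
        (MvPolynomial (Fin n) K ⧸ I ^ t) := by
  intro hA
  set Rn := MvPolynomial (Fin n) K
  set p : Ideal Rn := Ideal.span ((X : Fin n → Rn) '' T) with hpdef
  have hp : p.IsPrime := hA.isPrime
  set G : ℕ → Rn := fun k =>
    ∏ j ∈ Finset.univ.filter (fun j : Fin s => (j : ℕ) < k), (X (y j) : Rn) ^ α j with hG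
  have claim : ∀ k, k ≤ s → ∃ f, G k * f ∉ I ^ t ∧
      ∀ r, r ∈ p ↔ r * (G k * f) ∈ I ^ t := by
    intro k
    induction k with
    | zero =>
      intro _
      obtain ⟨f, hf, hiff⟩ := exists_of_mem_assPrimes hA
      have hG0 : G 0 = 1 := by
        simp [hG]
      exact ⟨f, by rwa [hG0, one_mul], fun r => by rw [hG0, one_mul]; exact hiff r⟩
    | succ k ih =>
      intro hk1
      have hk : k < s := hk1
      obtain ⟨f, hf, hiff⟩ := ih (le_of_lt hk)
      set i : Fin s := ⟨k, hk⟩ with hi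
      have hass : p ∉ associatedPrimes Rn
          (Rn ⧸ ((I ^ t).colon (Ideal.span {G k}) + Ideal.span {(X (y i) : Rn) ^ α i})) := by
        rcases Nat.eq_zero_or_pos k with h0 | hpos
        · have hG0 : G k = 1 := by subst h0; simp [hG]
          have hcol : (I ^ t).colon (Ideal.span {G k}) = I ^ t := by
            ext r
            rw [Submodule.mem_colon_span_singleton, smul_eq_mul, hG0, mul_one]
          rw [hcol]
          exact h1 i h0
        · have hfil : (Finset.univ.filter (fun j : Fin s => j < i)) =
              (Finset.univ.filter (fun j : Fin s => (j : ℕ) < k)) := by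
            apply Finset.filter_congr
            intro j _
            simp [Fin.lt_def, hi]
          have := h2 i hpos
          rw [hfil] at this
          exact this
      obtain ⟨h, hgh, hgiff⟩ := step_lemma hp hf hiff ((X (y i) : Rn) ^ α i) hass
      have hGsucc : G (k + 1) = G k * (X (y i) : Rn) ^ α i := by
        have hins : (Finset.univ.filter (fun j : Fin s => (j : ℕ) < k + 1)) =
            insert i (Finset.univ.filter (fun j : Fin s => (j : ℕ) < k)) := by
          ext j
          simp only [Finset.mem_insert, Finset.mem_filter, Finset.mem_univ, true_and]
          constructor
          · intro hj
            rcases Nat.lt_succ_iff_lt_or_eq.mp hj with h' | h'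
            · exact Or.inr h'
            · exact Or.inl (Fin.ext h')
          · rintro (rfl | hj)
            · exact Nat.lt_succ_self k
            · exact Nat.lt_succ_of_lt hj
        have hnotmem : i ∉ Finset.univ.filter (fun j : Fin s => (j : ℕ) < k) := by
          simp [hi]
        rw [hG]
        simp only
        rw [hins, Finset.prod_insert hnotmem, mul_comm]
      refine ⟨h, ?_, ?_⟩
      · rwa [hGsucc, mul_assoc]
      · intro r
        rw [hGsucc, mul_assoc]
        exact hgiff r
  obtain ⟨f, hf, _⟩ := claim s le_rfl
  apply hf
  have hGs : G s = ∏ i, (X (y i) : Rn) ^ α i := by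
    apply Finset.prod_congr _ (fun _ _ => rfl)
    simp
  have : G s ∈ I ^ t := Ideal.pow_le_pow_right hℓ (hGs ▸ hprod)
  exact Ideal.mul_mem_right f _ this


/-- With the hypotheses of Statement 4, if
`∏_{i=1}^s y_i^{α_i} ∈ I^ℓ` for some `ℓ ≥ t`, then `p ∉ Ass (R / I^t)`. -/
theorem not_associated_of_steps_and_prod_mem_pow
    {K : Type*} [Field K] {n s : ℕ}
    (I : Ideal (MvPolynomial (Fin n) K)) (hI : IsMonomialIdeal I)
    (T : Set (Fin n)) (t : ℕ) (ht : 1 ≤ t)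
    (α : Fin s → ℕ) (hα : ∀ i, 1 ≤ α i)
    (y : Fin s → Fin n) (hy : Function.Injective y)
    (h1 : ∀ i : Fin s, (i : ℕ) = 0 →
      Ideal.span ((X : Fin n → MvPolynomial (Fin n) K) '' T) ∉
        associatedPrimes (MvPolynomial (Fin n) K)
          (MvPolynomial (Fin n) K ⧸
            (I ^ t + Ideal.span {(X (y i) : MvPolynomial (Fin n) K) ^ α i})))
    (h2 : ∀ i : Fin s, 0 < (i : ℕ) →
      Ideal.span ((X : Fin n → MvPolynomial (Fin n) K) '' T) ∉
        associatedPrimes (MvPolynomial (Fin n) K)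
          (MvPolynomial (Fin n) K ⧸
            ((I ^ t).colon (Ideal.span
                {∏ j ∈ Finset.univ.filter (fun j => j < i),
                  (X (y j) : MvPolynomial (Fin n) K) ^ α j}) +
              Ideal.span {(X (y i) : MvPolynomial (Fin n) K) ^ α i})))
    (ℓ : ℕ) (hℓ : t ≤ ℓ)
    (hprod : (∏ i, (X (y i) : MvPolynomial (Fin n) K) ^ α i) ∈ I ^ ℓ) :
    Ideal.span ((X : Fin n → MvPolynomial (Fin n) K) '' T) ∉
      associatedPrimes (MvPolynomial (Fin n) K)
        (MvPolynomial (Fin n) K ⧸ I ^ t) := by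
  exact not_associated_of_steps_and_prod_mem_pow' I T t α y h1 h2 ℓ hℓ hprod
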